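/- Let (γ,ν): I → ℝ² × S¹ be a Legendre curve with γ(t)=(x(t),z(t)), ν(t)=(a(t),b(t)) and curvature (ℓ,β). Define the surface of revolution around the x-axis 𝐱(t,θ)=(x(t), z(t)cosθ, z(t)sinθ) together with 𝐧ˣ(t,θ)=(−a(t), −b(t)cosθ, −b(t)sinθ) and 𝐬ˣ(t,θ)=(0, sinθ, −cosθ). Then (𝐱,𝐧ˣ,𝐬ˣ) is a framed surface, and with 𝐭ˣ = 𝐧ˣ × 𝐬ˣ = (b(t), −a(t)cosθ, −a(t)sinθ) one has 𝐱_t = −β(t)𝐭ˣ, 𝐱_θ = −z(t)𝐬ˣ, 𝐧ˣ_t = ℓ(t)𝐭ˣ, 𝐧ˣ_θ = b(t)𝐬ˣ, 𝐬ˣ_t = 0, 𝐬ˣ_θ = −b(t)𝐧ˣ − a(t)𝐭ˣ; that is, its basic invariants are a₁=0, b₁=−β, a₂=−z, b₂=0, e₁=0, f₁=ℓ, g₁=0, e₂=b, f₂=0, g₂=−a. -/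

import Mathlib

open Matrix Real

/-- For a Legendre curve `(γ, ν)` with `γ = (x, z)`, `ν = (a, b)` and
curvature `(ℓ, β)` (so `ẋ = -βb`, `ż = βa`, `ȧ = -ℓb`, `ḃ = ℓa`, `a² + b² = 1`),
the surface of revolution around the x-axis `X(t,θ) = (x t, z t cos θ, z t sin θ)`
together with `N = (-a, -b cos θ, -b sin θ)` and `S = (0, sin θ, -cos θ)` is a framed
surface with `T = N ×₃ S = (b, -a cos θ, -a sin θ)`, and its basic invariants are
`a₁ = 0, b₁ = -β, a₂ = -z, b₂ = 0, e₁ = 0, f₁ = ℓ, g₁ = 0, e₂ = b, f₂ = 0, g₂ = -a`. -/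
theorem surface_of_revolution_x_axis_is_framed_surface
    (x z a b ℓ β : ℝ → ℝ)
    (hx : ContDiff ℝ (⊤ : ℕ∞) x) (hz : ContDiff ℝ (⊤ : ℕ∞) z)
    (ha : ContDiff ℝ (⊤ : ℕ∞) a) (hb : ContDiff ℝ (⊤ : ℕ∞) b)
    (hunit : ∀ t, a t ^ 2 + b t ^ 2 = 1)
    (hdx : ∀ t, deriv x t = -(β t) * b t)
    (hdz : ∀ t, deriv z t = β t * a t)
    (hda : ∀ t, deriv a t = -(ℓ t) * b t)
    (hdb : ∀ t, deriv b t = ℓ t * a t)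
    (X N S T : ℝ → ℝ → Fin 3 → ℝ)
    (hX : ∀ t θ, X t θ = ![x t, z t * cos θ, z t * sin θ])
    (hN : ∀ t θ, N t θ = ![-(a t), -(b t) * cos θ, -(b t) * sin θ])
    (hS : ∀ t θ, S t θ = ![0, sin θ, -cos θ])
    (hT : ∀ t θ, T t θ = ![b t, -(a t) * cos θ, -(a t) * sin θ]) :
    ∀ t θ : ℝ,
      -- (N, S) takes values in Δ, i.e. (X, N, S) maps into ℝ³ × Δ
      (N t θ ⬝ᵥ N t θ = 1 ∧ S t θ ⬝ᵥ S t θ = 1 ∧ N t θ ⬝ᵥ S t θ = 0) ∧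
      -- T = N ×₃ S
      crossProduct (N t θ) (S t θ) = T t θ ∧
      -- (X, N, S) is a framed surface: X_t ⬝ N = X_θ ⬝ N = 0
      (deriv (fun s => X s θ) t ⬝ᵥ N t θ = 0 ∧
        deriv (fun θ' => X t θ') θ ⬝ᵥ N t θ = 0) ∧
      -- X_t = 0 • S + (-β) • T  (a₁ = 0, b₁ = -β)
      HasDerivAt (fun s => X s θ) ((0 : ℝ) • S t θ + (-(β t)) • T t θ) t ∧
      -- X_θ = (-z) • S + 0 • T  (a₂ = -z, b₂ = 0)
      HasDerivAt (fun θ' => X t θ') ((-(z t)) • S t θ + (0 : ℝ) • T t θ) θ ∧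
      -- N_t = 0 • S + ℓ • T  (e₁ = 0, f₁ = ℓ)
      HasDerivAt (fun s => N s θ) ((0 : ℝ) • S t θ + (ℓ t) • T t θ) t ∧
      -- N_θ = b • S + 0 • T  (e₂ = b, f₂ = 0)
      HasDerivAt (fun θ' => N t θ') ((b t) • S t θ + (0 : ℝ) • T t θ) θ ∧
      -- S_t = -0 • N + 0 • T  (g₁ = 0)
      HasDerivAt (fun s => S s θ) (-(0 : ℝ) • N t θ + (0 : ℝ) • T t θ) t ∧
      -- S_θ = (-b) • N + (-a) • T  (g₂ = -a)
      HasDerivAt (fun θ' => S t θ') ((-(b t)) • N t θ + (-(a t)) • T t θ) θ := by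
  intro t θ
  have htop : ((⊤ : ℕ∞) : WithTop ℕ∞) ≠ 0 := by simp
  have hxd : HasDerivAt x (-(β t) * b t) t := by
    have := (hx.differentiable htop t).hasDerivAt; rwa [hdx t] at this
  have hzd : HasDerivAt z (β t * a t) t := by
    have := (hz.differentiable htop t).hasDerivAt; rwa [hdz t] at this
  have had : HasDerivAt a (-(ℓ t) * b t) t := by
    have := (ha.differentiable htop t).hasDerivAt; rwa [hda t] at this
  have hbd : HasDerivAt b (ℓ t * a t) t := by
    have := (hb.differentiable htop t).hasDerivAt; rwa [hdb t] at this
  have pyth := sin_sq_add_cos_sq θ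
  have hXt : HasDerivAt (fun s => X s θ) ((0 : ℝ) • S t θ + (-(β t)) • T t θ) t := by
    have h0 : HasDerivAt (fun s => X s θ)
        ![-(β t) * b t, β t * a t * cos θ, β t * a t * sin θ] t := by
      rw [hasDerivAt_pi]; intro i
      fin_cases i <;> simp only [hX, Matrix.cons_val_zero, Matrix.cons_val_one,
        Matrix.head_cons, Matrix.cons_val_two, Matrix.tail_cons, Fin.mk_zero,
        Fin.mk_one]
      · exact hxd
      · exact hzd.mul_const (cos θ)
      · exact hzd.mul_const (sin θ)
    convert h0 using 1
    ext i; fin_cases i <;> simp [hS, hT] <;> ring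
  have hXθ : HasDerivAt (fun θ' => X t θ') ((-(z t)) • S t θ + (0 : ℝ) • T t θ) θ := by
    have h0 : HasDerivAt (fun θ' => X t θ')
        ![0, z t * (-sin θ), z t * cos θ] θ := by
      rw [hasDerivAt_pi]; intro i
      fin_cases i <;> simp only [hX, Matrix.cons_val_zero, Matrix.cons_val_one,
        Matrix.head_cons, Matrix.cons_val_two, Matrix.tail_cons, Fin.mk_zero,
        Fin.mk_one]
      · exact hasDerivAt_const θ (x t)
      · exact (Real.hasDerivAt_cos θ).const_mul (z t)
      · exact (Real.hasDerivAt_sin θ).const_mul (z t)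
    convert h0 using 1
    ext i; fin_cases i <;> simp [hS, hT] <;> ring
  have hNt : HasDerivAt (fun s => N s θ) ((0 : ℝ) • S t θ + (ℓ t) • T t θ) t := by
    have h0 : HasDerivAt (fun s => N s θ)
        ![-(-(ℓ t) * b t), -(ℓ t * a t) * cos θ, -(ℓ t * a t) * sin θ] t := by
      rw [hasDerivAt_pi]; intro i
      fin_cases i <;> simp only [hN, Matrix.cons_val_zero, Matrix.cons_val_one,
        Matrix.head_cons, Matrix.cons_val_two, Matrix.tail_cons, Fin.mk_zero,
        Fin.mk_one]
      · exact had.neg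
      · exact hbd.neg.mul_const (cos θ)
      · exact hbd.neg.mul_const (sin θ)
    convert h0 using 1
    ext i; fin_cases i <;> simp [hS, hT] <;> ring
  have hNθ : HasDerivAt (fun θ' => N t θ') ((b t) • S t θ + (0 : ℝ) • T t θ) θ := by
    have h0 : HasDerivAt (fun θ' => N t θ')
        ![0, -(b t) * (-sin θ), -(b t) * cos θ] θ := by
      rw [hasDerivAt_pi]; intro i
      fin_cases i <;> simp only [hN, Matrix.cons_val_zero, Matrix.cons_val_one,
        Matrix.head_cons, Matrix.cons_val_two, Matrix.tail_cons, Fin.mk_zero,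
        Fin.mk_one]
      · exact hasDerivAt_const θ (-(a t))
      · exact (Real.hasDerivAt_cos θ).const_mul (-(b t))
      · exact (Real.hasDerivAt_sin θ).const_mul (-(b t))
    convert h0 using 1
    ext i; fin_cases i <;> simp [hS, hT] <;> ring
  have hSt : HasDerivAt (fun s => S s θ) (-(0 : ℝ) • N t θ + (0 : ℝ) • T t θ) t := by
    have heq : (fun s : ℝ => S s θ) = fun _ => S t θ := by funext s; rw [hS, hS]
    rw [heq]
    have h0 : (-(0 : ℝ) • N t θ + (0 : ℝ) • T t θ) = 0 := by simp
    rw [h0]; exact hasDerivAt_const t (S t θ)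
  have hSθ : HasDerivAt (fun θ' => S t θ') ((-(b t)) • N t θ + (-(a t)) • T t θ) θ := by
    have h0 : HasDerivAt (fun θ' => S t θ') ![0, cos θ, sin θ] θ := by
      rw [hasDerivAt_pi]; intro i
      fin_cases i <;> simp only [hS, Matrix.cons_val_zero, Matrix.cons_val_one,
        Matrix.head_cons, Matrix.cons_val_two, Matrix.tail_cons, Fin.mk_zero,
        Fin.mk_one]
      · exact hasDerivAt_const θ (0 : ℝ)
      · exact Real.hasDerivAt_sin θ
      · simpa using (Real.hasDerivAt_cos θ).fun_neg
    convert h0 using 1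
    ext i
    fin_cases i <;> simp [hN, hT] <;>
      first
        | ring1
        | linear_combination (sin θ) * hunit t
        | linear_combination (-(sin θ)) * hunit t
        | linear_combination (cos θ) * hunit t
        | linear_combination (-(cos θ)) * hunit t
  refine ⟨⟨?_, ?_, ?_⟩, ?_, ⟨?_, ?_⟩, hXt, hXθ, hNt, hNθ, hSt, hSθ⟩
  · simp only [hN, dotProduct, Fin.sum_univ_three, Matrix.cons_val_zero,
      Matrix.cons_val_one, Matrix.head_cons, Matrix.cons_val_two, Matrix.tail_cons]
    linear_combination hunit t + (b t) ^ 2 * pyth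
  · simp only [hS, dotProduct, Fin.sum_univ_three, Matrix.cons_val_zero,
      Matrix.cons_val_one, Matrix.head_cons, Matrix.cons_val_two, Matrix.tail_cons]
    linear_combination pyth
  · simp only [hN, hS, dotProduct, Fin.sum_univ_three, Matrix.cons_val_zero,
      Matrix.cons_val_one, Matrix.head_cons, Matrix.cons_val_two, Matrix.tail_cons]
    ring
  · ext i
    fin_cases i <;> simp [crossProduct, hN, hS, hT] <;>
      first
        | ring1
        | linear_combination (b t) * pyth
        | linear_combination (cos θ) * hunit t
        | linear_combination (sin θ) * hunit t
  · rw [hXt.deriv]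
    simp only [hS, hT, hN, dotProduct, Fin.sum_univ_three, Pi.add_apply,
      Pi.smul_apply, smul_eq_mul, Matrix.cons_val_zero, Matrix.cons_val_one,
      Matrix.head_cons, Matrix.cons_val_two, Matrix.tail_cons]
    linear_combination -(β t * b t * a t) * pyth
  · rw [hXθ.deriv]
    simp only [hS, hT, hN, dotProduct, Fin.sum_univ_three, Pi.add_apply,
      Pi.smul_apply, smul_eq_mul, Matrix.cons_val_zero, Matrix.cons_val_one,
      Matrix.head_cons, Matrix.cons_val_two, Matrix.tail_cons]
    ring
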